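/- Let I ⊂ ℝ be a compact interval, let ξ_0, …, ξ_n be independent standard Gaussian random variables, and let p_0, …, p_n be real polynomials with deg p_j = j for each j. Set H(x) = Σ_{j=0}^n ξ_j p_j(x). Then almost surely H has no double root in I: with probability one there is no x ∈ I with H(x) = 0 and H'(x) = 0. -/

import Mathlib

set_option autoImplicit false

open MeasureTheory ProbabilityTheory

/-- The set of parameters for which two jointly continuous functions have a common zero in a
compact interval is closed. -/
lemma isClosed_exists_common_zero {X : Type*} [MetricSpace X] (a b : ℝ) (f g : X → ℝ → ℝ)
    (hf : Continuous fun q : X × ℝ => f q.1 q.2) (hg : Continuous fun q : X × ℝ => g q.1 q.2) :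
    IsClosed {x | ∃ t ∈ Set.Icc a b, f x t = 0 ∧ g x t = 0} := by
  apply IsSeqClosed.isClosed
  intro u x hu hux
  choose t ht h1 h2 using hu
  obtain ⟨s, hsmem, φ, hφ, hts⟩ := (isCompact_Icc (a := a) (b := b)).tendsto_subseq ht
  have hpair : Filter.Tendsto (fun k => (u (φ k), t (φ k))) Filter.atTop (nhds (x, s)) :=
    ((hux.comp hφ.tendsto_atTop).prodMk_nhds hts)
  refine ⟨s, hsmem, ?_, ?_⟩
  · have h := (hf.tendsto (x, s)).comp hpair
    have h0 : (fun k => f (u (φ k)) (t (φ k))) = fun _ => (0 : ℝ) := funext fun k => h1 _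
    have := h.congr' (Filter.Eventually.of_forall (fun k => congrFun h0 k))
    exact tendsto_nhds_unique this tendsto_const_nhds
  · have h := (hg.tendsto (x, s)).comp hpair
    have h0 : (fun k => g (u (φ k)) (t (φ k))) = fun _ => (0 : ℝ) := funext fun k => h2 _
    have := h.congr' (Filter.Eventually.of_forall (fun k => congrFun h0 k))
    exact tendsto_nhds_unique this tendsto_const_nhds

theorem no_double_root_as {Ω : Type*} [MeasureSpace Ω] [IsProbabilityMeasure (ℙ : Measure Ω)]
    (a b : ℝ) (n : ℕ) (ξ : ℕ → Ω → ℝ)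
    (hmeas : ∀ j, Measurable (ξ j))
    (hindep : iIndepFun (fun j : Fin (n + 1) => ξ j) ℙ)
    (hgauss : ∀ j ≤ n, Measure.map (ξ j) ℙ = gaussianReal 0 1)
    (p : ℕ → Polynomial ℝ) (hdeg : ∀ j ≤ n, (p j).degree = (j : ℕ)) :
    ℙ {ω | ∃ x ∈ Set.Icc a b,
        (∑ j ∈ Finset.range (n + 1), ξ j ω * (p j).eval x) = 0 ∧
        deriv (fun y => ∑ j ∈ Finset.range (n + 1), ξ j ω * (p j).eval y) x = 0} = 0 := by
  classical
  -- p 0 is a nonzero constant γ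
  set γ : ℝ := (p 0).coeff 0 with hγdef
  have hdeg0 : (p 0).degree = (0 : ℕ) := hdeg 0 n.zero_le
  have hp0 : p 0 = Polynomial.C γ := Polynomial.eq_C_of_degree_le_zero (le_of_eq hdeg0)
  have hγ : γ ≠ 0 := by
    intro h
    rw [hp0, h, map_zero, Polynomial.degree_zero] at hdeg0
    exact absurd hdeg0.symm (by simp)
  -- the vector of the remaining variables
  set T : Ω → (Fin n → ℝ) := fun ω j => ξ (j + 1) ω with hTdef
  have hTmeas : Measurable T := measurable_pi_lambda _ fun j => hmeas _
  -- independence of T and ξ 0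
  have hindepT : IndepFun T (ξ 0) ℙ := by
    have hdisj : Disjoint (Finset.image Fin.succ (Finset.univ : Finset (Fin n)))
        ({0} : Finset (Fin (n + 1))) := by
      simp only [Finset.disjoint_singleton_right, Finset.mem_image]
      rintro ⟨j, -, hj⟩
      exact Fin.succ_ne_zero j hj
    have h := hindep.indepFun_finset _ _ hdisj (fun i => hmeas i)
    have hmem : ∀ j : Fin n, Fin.succ j ∈ Finset.image Fin.succ (Finset.univ : Finset (Fin n)) :=
      fun j => Finset.mem_image_of_mem _ (Finset.mem_univ j)
    have h0mem : (0 : Fin (n + 1)) ∈ ({0} : Finset (Fin (n + 1))) := Finset.mem_singleton_self 0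
    have hT2 := h.comp
      (φ := fun v : (Finset.image Fin.succ (Finset.univ : Finset (Fin n)) : Finset (Fin (n+1))) → ℝ
        => fun j : Fin n => v ⟨Fin.succ j, hmem j⟩)
      (ψ := fun v : (({0} : Finset (Fin (n + 1))) : Finset (Fin (n+1))) → ℝ => v ⟨0, h0mem⟩)
      (measurable_pi_lambda _ fun j => measurable_pi_apply _)
      (measurable_pi_apply _ : Measurable fun v : (({0} : Finset (Fin (n + 1))) : Finset (Fin (n+1))) → ℝ => v ⟨0, h0mem⟩)
    have e1 : ((fun v : (Finset.image Fin.succ (Finset.univ : Finset (Fin n)) :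
          Finset (Fin (n+1))) → ℝ => fun j : Fin n => v ⟨Fin.succ j, hmem j⟩) ∘
        (fun a (i : (Finset.image Fin.succ (Finset.univ : Finset (Fin n)) :
          Finset (Fin (n+1)))) => ξ i a)) = T := by
      funext ω j
      simp [hTdef, Fin.val_succ]
    have e2 : ((fun v : (({0} : Finset (Fin (n + 1))) : Finset (Fin (n+1))) → ℝ => v ⟨0, h0mem⟩) ∘
        (fun a (i : (({0} : Finset (Fin (n + 1))) : Finset (Fin (n+1)))) => ξ i a)) = ξ 0 := by
      funext ω
      simp
    rwa [e1, e2] at hT2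
  -- the bad set of parameters
  set A : Set ((Fin n → ℝ) × ℝ) := {ct | ∃ x ∈ Set.Icc a b,
      ct.2 * γ + ∑ j : Fin n, ct.1 j * (p (j + 1 : ℕ)).eval x = 0 ∧
      ∑ j : Fin n, ct.1 j * (Polynomial.derivative (p (j + 1 : ℕ))).eval x = 0} with hAdef
  have hAclosed : IsClosed A := by
    have hfc : Continuous fun q : ((Fin n → ℝ) × ℝ) × ℝ =>
        q.1.2 * γ + ∑ j : Fin n, q.1.1 j * (p (j + 1 : ℕ)).eval q.2 := by
      apply Continuous.add
      · exact ((continuous_snd.comp continuous_fst).mul continuous_const)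
      · apply continuous_finset_sum
        intro j _
        exact ((continuous_apply j).comp (continuous_fst.comp continuous_fst)).mul
          ((p (j + 1 : ℕ)).continuous.comp continuous_snd)
    have hgc : Continuous fun q : ((Fin n → ℝ) × ℝ) × ℝ =>
        ∑ j : Fin n, q.1.1 j * (Polynomial.derivative (p (j + 1 : ℕ))).eval q.2 := by
      apply continuous_finset_sum
      intro j _
      exact ((continuous_apply j).comp (continuous_fst.comp continuous_fst)).mul
        ((Polynomial.derivative (p (j + 1 : ℕ))).continuous.comp continuous_snd)
    exact isClosed_exists_common_zero a b
      (fun (ct : (Fin n → ℝ) × ℝ) (x : ℝ) =>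
        ct.2 * γ + ∑ j : Fin n, ct.1 j * (p (j + 1 : ℕ)).eval x)
      (fun (ct : (Fin n → ℝ) × ℝ) (x : ℝ) =>
        ∑ j : Fin n, ct.1 j * (Polynomial.derivative (p (j + 1 : ℕ))).eval x) hfc hgc
  -- the event is contained in the preimage of A
  have hsub : {ω | ∃ x ∈ Set.Icc a b,
        (∑ j ∈ Finset.range (n + 1), ξ j ω * (p j).eval x) = 0 ∧
        deriv (fun y => ∑ j ∈ Finset.range (n + 1), ξ j ω * (p j).eval y) x = 0}
      ⊆ (fun ω => (T ω, ξ 0 ω)) ⁻¹' A := by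
    rintro ω ⟨x, hx, h1, h2⟩
    refine ⟨x, hx, ?_, ?_⟩
    · rw [Finset.sum_range_succ'] at h1
      rw [← h1]
      simp only [hTdef]
      rw [Finset.sum_range fun i => ξ (i + 1) ω * (p (i + 1)).eval x]
      rw [hp0, Polynomial.eval_C]
      ring
    · have heq : (fun y => ∑ j ∈ Finset.range (n + 1), ξ j ω * (p j).eval y)
          = fun y => (∑ j ∈ Finset.range (n + 1), Polynomial.C (ξ j ω) * p j).eval y := by
        funext y
        rw [Polynomial.eval_finset_sum]
        simp
      rw [heq, Polynomial.deriv, map_sum, Polynomial.eval_finset_sum] at h2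
      simp only [Polynomial.derivative_C_mul, Polynomial.eval_mul, Polynomial.eval_C] at h2
      rw [Finset.sum_range_succ'] at h2
      rw [hp0, Polynomial.derivative_C] at h2
      simp only [Polynomial.eval_zero, mul_zero, add_zero] at h2
      rw [← h2]
      simp only [hTdef]
      rw [Finset.sum_range fun i => ξ (i + 1) ω * (Polynomial.derivative (p (i + 1))).eval x]
  -- every slice of A is contained in a finite set
  have hslice : ∀ c : Fin n → ℝ, (gaussianReal 0 1) (Prod.mk c ⁻¹' A) = 0 := by
    intro c
    have hnull : ∀ s : Set ℝ, s.Finite → (gaussianReal 0 1) s = 0 := fun s hs =>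
      (gaussianReal_absolutelyContinuous 0 one_ne_zero) (hs.measure_zero _)
    set q : Polynomial ℝ := ∑ j : Fin n, Polynomial.C (c j) * p (j + 1 : ℕ) with hqdef
    have hqe : ∀ x : ℝ, q.eval x = ∑ j : Fin n, c j * (p (j + 1 : ℕ)).eval x := by
      intro x; rw [hqdef, Polynomial.eval_finset_sum]; simp
    have hqd : ∀ x : ℝ, (Polynomial.derivative q).eval x
        = ∑ j : Fin n, c j * (Polynomial.derivative (p (j + 1 : ℕ))).eval x := by
      intro x
      rw [hqdef, map_sum, Polynomial.eval_finset_sum]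
      simp [Polynomial.derivative_C_mul]
    by_cases hq : Polynomial.derivative q = 0
    · refine measure_mono_null (t := {-(q.coeff 0) / γ}) ?_ (hnull _ (Set.finite_singleton _))
      rintro t ⟨x, -, h1, -⟩
      have hqc : q = Polynomial.C (q.coeff 0) := Polynomial.eq_C_of_derivative_eq_zero hq
      have : t * γ + q.eval x = 0 := by rw [hqe]; exact h1
      rw [hqc, Polynomial.eval_C] at this
      simp only [Set.mem_singleton_iff]
      field_simp
      linarith
    · refine measure_mono_null (t := (fun x => -(q.eval x) / γ) '' {x | q.derivative.IsRoot x})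
        ?_ (hnull _ ((Polynomial.finite_setOf_isRoot hq).image _))
      rintro t ⟨x, -, h1, h2⟩
      refine ⟨x, ?_, ?_⟩
      · show (Polynomial.derivative q).eval x = 0
        rw [hqd]; exact h2
      · have : t * γ + q.eval x = 0 := by rw [hqe]; exact h1
        field_simp
        linarith
  -- put everything together
  have hmap : Measure.map (fun ω => (T ω, ξ 0 ω)) ℙ
      = (Measure.map T ℙ).prod (Measure.map (ξ 0) ℙ) :=
    (indepFun_iff_map_prod_eq_prod_map_map hTmeas.aemeasurable (hmeas 0).aemeasurable).mp hindepT
  have hprob : IsProbabilityMeasure (Measure.map T ℙ) :=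
    Measure.isProbabilityMeasure_map hTmeas.aemeasurable
  refine le_antisymm ?_ zero_le
  calc ℙ {ω | ∃ x ∈ Set.Icc a b,
        (∑ j ∈ Finset.range (n + 1), ξ j ω * (p j).eval x) = 0 ∧
        deriv (fun y => ∑ j ∈ Finset.range (n + 1), ξ j ω * (p j).eval y) x = 0}
      ≤ ℙ ((fun ω => (T ω, ξ 0 ω)) ⁻¹' A) := measure_mono hsub
    _ = Measure.map (fun ω => (T ω, ξ 0 ω)) ℙ A :=
        (Measure.map_apply (hTmeas.prodMk (hmeas 0)) hAclosed.measurableSet).symm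
    _ = (Measure.map T ℙ).prod (Measure.map (ξ 0) ℙ) A := by rw [hmap]
    _ = ∫⁻ c, Measure.map (ξ 0) ℙ (Prod.mk c ⁻¹' A) ∂(Measure.map T ℙ) :=
        Measure.prod_apply hAclosed.measurableSet
    _ = 0 := by
        rw [hgauss 0 n.zero_le]
        simp [hslice]
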